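/- arXiv:1408.1712 — 2 statements merged into one kernel-verified Lean document; each statement's English description precedes it below -/
import Mathlib

section
/- Let F : ℝⁿ → ℝⁿ be a C¹ vector field, φ : U → ℝ a C¹ function on an open set U, and suppose there exists a continuous function K : U → ℝ with ∇φ(x) · F(x) = K(x) φ(x) for all x ∈ U (Darboux condition). Then the zero set {x ∈ U : φ(x) = 0} is invariant under the flow of x' = F(x): any solution starting in the zero set and remaining in U stays in the zero set. -/
/-- Darboux invariance: if ∇φ·F = K·φ on an open set U, the zero set of φ is
invariant under the flow of x' = F(x): a solution starting in {φ = 0} and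
remaining in U stays in {φ = 0}. -/
theorem darboux_invariance (n : ℕ) (F : (Fin n → ℝ) → (Fin n → ℝ)) (hF : ContDiff ℝ 1 F)
    (U : Set (Fin n → ℝ)) (hU : IsOpen U)
    (φ : (Fin n → ℝ) → ℝ) (hφ : ContDiffOn ℝ 1 φ U)
    (K : (Fin n → ℝ) → ℝ) (hK : ContinuousOn K U)
    (hdarboux : ∀ x ∈ U, fderiv ℝ φ x (F x) = K x * φ x)
    (x : ℝ → (Fin n → ℝ)) (hx : ∀ t, HasDerivAt x (F (x t)) t)
    (hxU : ∀ t, x t ∈ U) (h0 : φ (x 0) = 0) :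
    ∀ t, φ (x t) = 0 := by
  have hxc : Continuous x := continuous_iff_continuousAt.mpr fun t => (hx t).continuousAt
  -- k : the coefficient along the trajectory
  set k : ℝ → ℝ := fun t => K (x t) with hk_def
  have hkc : Continuous k := hK.comp_continuous hxc hxU
  -- derivative of g = φ ∘ x
  have hg : ∀ t, HasDerivAt (fun t => φ (x t)) (k t * φ (x t)) t := by
    intro t
    have hφd : HasFDerivAt φ (fderiv ℝ φ (x t)) (x t) := by
      have := (hφ.differentiableOn one_ne_zero).differentiableAt (hU.mem_nhds (hxU t))
      exact this.hasFDerivAt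
    have := hφd.comp_hasDerivAt t (hx t)
    rwa [hdarboux (x t) (hxU t)] at this
  -- integrating factor
  set H : ℝ → ℝ := fun t => ∫ s in (0:ℝ)..t, k s with hH_def
  have hH : ∀ t, HasDerivAt H (k t) t := fun t =>
    intervalIntegral.integral_hasDerivAt_right (hkc.intervalIntegrable _ _)
      (hkc.stronglyMeasurableAtFilter _ _) hkc.continuousAt
  have hh : ∀ t, HasDerivAt (fun t => φ (x t) * Real.exp (-H t)) 0 t := by
    intro t
    have he : HasDerivAt (fun t => Real.exp (-H t)) (-k t * Real.exp (-H t)) t := by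
      have := (Real.hasDerivAt_exp (-H t)).comp t ((hH t).neg)
      exact this.congr_deriv (by ring)
    have := (hg t).mul he
    exact this.congr_deriv (by ring)
  have hconst : ∀ t, φ (x t) * Real.exp (-H t) = φ (x 0) * Real.exp (-H 0) := by
    intro t
    have : ∀ s, HasDerivAt (fun t => φ (x t) * Real.exp (-H t)) 0 s := hh
    exact (is_const_of_deriv_eq_zero (fun s => (hh s).differentiableAt)
      (fun s => (hh s).deriv) t 0)
  intro t
  have := hconst t
  rw [h0, zero_mul] at this
  have hne : Real.exp (-H t) ≠ 0 := Real.exp_ne_zero _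
  exact (mul_eq_zero.mp this).resolve_right hne
end

section
/- For the vector field F on ℝ⁵ given by F(x) = (−x₂, x₁, L(x₁²+x₂²−x₃), β₁+x₄², β₂+x₂²), the function φ(x) = (x₁²+x₂²)(x₁²+x₂²−x₃)(x₄²+β₁) satisfies the Darboux relation L_F φ = −(L − 2x₄)·φ, hence its zero set is invariant under the flow of x' = F(x). -/
/-- Darboux relation L_F φ = −(L − 2x₄)·φ for the Gear et al. fifth-order system,
hence the zero set of φ is invariant under the flow. -/
theorem darboux_gear (L β₁ β₂ : ℝ)
    (F : (Fin 5 → ℝ) → (Fin 5 → ℝ))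
    (hF : ∀ x, F x = ![-x 1, x 0, L * ((x 0) ^ 2 + (x 1) ^ 2 - x 2),
      β₁ + (x 3) ^ 2, β₂ + (x 1) ^ 2])
    (φ : (Fin 5 → ℝ) → ℝ)
    (hφ : ∀ x, φ x = ((x 0) ^ 2 + (x 1) ^ 2) * ((x 0) ^ 2 + (x 1) ^ 2 - x 2) *
      ((x 3) ^ 2 + β₁)) :
    (∀ x, fderiv ℝ φ x (F x) = -(L - 2 * x 3) * φ x) ∧
    (∀ x : ℝ → (Fin 5 → ℝ), (∀ t, HasDerivAt x (F (x t)) t) →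
      φ (x 0) = 0 → ∀ t, φ (x t) = 0) := by
  have hφ' : φ = fun x => ((x 0) ^ 2 + (x 1) ^ 2) * ((x 0) ^ 2 + (x 1) ^ 2 - x 2) *
      ((x 3) ^ 2 + β₁) := funext hφ
  have key : ∀ x : Fin 5 → ℝ, ∃ D : (Fin 5 → ℝ) →L[ℝ] ℝ,
      HasFDerivAt φ D x ∧ D (F x) = -(L - 2 * x 3) * φ x := by
    intro x
    have hp : ∀ i : Fin 5, HasFDerivAt (fun x : Fin 5 → ℝ => x i)
        (ContinuousLinearMap.proj i : (Fin 5 → ℝ) →L[ℝ] ℝ) x := fun i =>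
      (ContinuousLinearMap.proj i : (Fin 5 → ℝ) →L[ℝ] ℝ).hasFDerivAt
    have hA := ((hp 0).mul (hp 0)).add ((hp 1).mul (hp 1))
    have hB := hA.sub (hp 2)
    have hC := ((hp 3).mul (hp 3)).add_const β₁
    have hD := (hA.mul hB).mul hC
    have hφ'' : φ = fun y => (y 0 * y 0 + y 1 * y 1) * (y 0 * y 0 + y 1 * y 1 - y 2) *
        (y 3 * y 3 + β₁) := by
      funext z; rw [hφ]; ring
    rw [hφ'']
    refine ⟨_, hD, ?_⟩
    rw [hF]
    simp [ContinuousLinearMap.smul_apply, ContinuousLinearMap.add_apply,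
      ContinuousLinearMap.sub_apply, ContinuousLinearMap.proj_apply,
      Matrix.cons_val_zero, Matrix.cons_val_one, Matrix.head_cons, Fin.isValue]
    ring
  refine ⟨fun x => ?_, fun x hx h0 t => ?_⟩
  · obtain ⟨D, hD, hDF⟩ := key x
    rw [hD.fderiv, hDF]
  · set y : ℝ → ℝ := fun t => φ (x t) with hy
    set a : ℝ → ℝ := fun t => -(L - 2 * x t 3) with ha
    have hy' : ∀ t, HasDerivAt y (a t * y t) t := by
      intro t
      obtain ⟨D, hD, hDF⟩ := key (x t)
      have := hD.comp_hasDerivAt t (hx t)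
      rwa [hDF] at this
    have hcont : Continuous a := by
      have hxc : Continuous x := continuous_iff_continuousAt.mpr fun t => (hx t).continuousAt
      have hx3 : Continuous fun t => x t 3 := (continuous_apply 3).comp hxc
      continuity
    set A : ℝ → ℝ := fun t => ∫ s in (0:ℝ)..t, a s with hA
    have hA' : ∀ t, HasDerivAt A (a t) t := fun t =>
      hcont.integral_hasStrictDerivAt 0 t |>.hasDerivAt
    set h : ℝ → ℝ := fun t => y t * Real.exp (-A t) with hh
    have hh' : ∀ t, HasDerivAt h 0 t := by
      intro t
      have he : HasDerivAt (fun t => Real.exp (-A t)) (Real.exp (-A t) * (-a t)) t :=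
        ((hA' t).neg.exp)
      have : HasDerivAt (fun s => y s * Real.exp (-A s))
          (a t * y t * Real.exp (-A t) + y t * (Real.exp (-A t) * -a t)) t := (hy' t).mul he
      convert this using 1
      ring
    have hconst : ∀ t, h t = h 0 := by
      intro t
      have : ∀ s, deriv h s = 0 := fun s => (hh' s).deriv
      exact is_const_of_deriv_eq_zero (fun s => (hh' s).differentiableAt) this t 0
    have ht := hconst t
    have h00 : h 0 = 0 := by simp [hh, hy, h0]
    rw [h00] at ht
    have : y t * Real.exp (-A t) = 0 := ht
    have hexp : Real.exp (-A t) ≠ 0 := Real.exp_ne_zero _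
    exact (mul_eq_zero.mp this).resolve_right hexp
end
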